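/- Let 1 ≤ M ≤ N−1, let 1 ≤ i ≤ N−M, and set c = k_i + k_{M+i}, S⁺ = {i, i+1, …, M+i−1} and S⁻ = {i+1, …, M+i}. Then Σ_{j∈S⁺} η_j(c) = Σ_{j∈S⁻} η_j(c), and for every M-element subset S of {1,…,N} with S ≠ S⁺ and S ≠ S⁻ one has Σ_{j∈S} η_j(c) > Σ_{j∈S⁺} η_j(c). That is, the minimum of S ↦ Σ_{j∈S} η_j(c) over M-element subsets is attained exactly at S⁺ and S⁻. -/

import Mathlib

/-- For 1 ≤ M ≤ N−1, 1 ≤ i ≤ N−M and c = k_i + k_{M+i}, with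
S⁺ = {i,…,M+i−1} and S⁻ = {i+1,…,M+i}, the sums Σ_{j∈S⁺} η_j(c) and
Σ_{j∈S⁻} η_j(c) agree, and every other M-element subset S of {1,…,N} has a
strictly larger sum: the minimum of S ↦ Σ_{j∈S} η_j(c) is attained exactly
at S⁺ and S⁻. -/
theorem dominant_balance_min
    (N : ℕ) (hN : 2 ≤ N)
    (k : ℕ → ℝ)
    (hk : ∀ a b, 1 ≤ a → a < b → b ≤ N → k a < k b)
    (η : ℕ → ℝ → ℝ)
    (hη : ∀ i c, η i c = k i * (k i - c))
    (M : ℕ) (hM1 : 1 ≤ M) (hM2 : M ≤ N - 1)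
    (i : ℕ) (hi1 : 1 ≤ i) (hi2 : i ≤ N - M)
    (c : ℝ) (hc : c = k i + k (M + i)) :
    (∑ j ∈ Finset.Icc i (M + i - 1), η j c) = (∑ j ∈ Finset.Icc (i + 1) (M + i), η j c) ∧
    ∀ S ∈ Finset.powersetCard M (Finset.Icc 1 N),
      S ≠ Finset.Icc i (M + i - 1) → S ≠ Finset.Icc (i + 1) (M + i) →
        (∑ j ∈ Finset.Icc i (M + i - 1), η j c) < ∑ j ∈ S, η j c := by
  have hMN : M + i ≤ N := by omega
  set f : ℕ → ℝ := fun j => (k j - k i) * (k j - k (M + i)) with hf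
  have hfη : ∀ j, η j c = f j - k i * k (M + i) := by
    intro j; rw [hη, hc, hf]; ring
  have hki : k i < k (M + i) := hk i (M + i) hi1 (by omega) hMN
  have hfpos : ∀ j, 1 ≤ j → j ≤ N → (j < i ∨ M + i < j) → 0 < f j := by
    intro j h1 h2 h3
    rcases h3 with h | h
    · have h1' : k j < k i := hk j i h1 h (by omega)
      have h2' : k j < k (M + i) := lt_trans h1' hki
      simp only [hf]; nlinarith
    · have h1' : k i < k j := hk i j hi1 (by omega) h2
      have h2' : k (M + i) < k j := hk (M + i) j (by omega) h h2
      simp only [hf]; nlinarith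
  have hfneg : ∀ j, i < j → j < M + i → f j < 0 := by
    intro j h1 h2
    have h1' : k i < k j := hk i j hi1 h1 (by omega)
    have h2' : k j < k (M + i) := hk j (M + i) (by omega) h2 hMN
    simp only [hf]; nlinarith
  have hfi : f i = 0 := by simp [hf]
  have hfMi : f (M + i) = 0 := by simp [hf]
  set T : Finset ℕ := Finset.Icc (i + 1) (M + i - 1) with hT
  have hiT : i ∉ T := by simp [hT, Finset.mem_Icc]
  have hMiT : M + i ∉ T := by simp [hT, Finset.mem_Icc]; omega
  have hSp : Finset.Icc i (M + i - 1) = insert i T := by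
    ext j; simp [hT, Finset.mem_Icc, Finset.mem_insert]; omega
  have hSm : Finset.Icc (i + 1) (M + i) = insert (M + i) T := by
    ext j; simp [hT, Finset.mem_Icc, Finset.mem_insert]; omega
  have hsum : ∀ S : Finset ℕ, ∑ j ∈ S, η j c = (∑ j ∈ S, f j) - S.card * (k i * k (M + i)) := by
    intro S
    calc ∑ j ∈ S, η j c = ∑ j ∈ S, (f j - k i * k (M + i)) :=
          Finset.sum_congr rfl (fun j _ => hfη j)
      _ = (∑ j ∈ S, f j) - S.card * (k i * k (M + i)) := by
          rw [Finset.sum_sub_distrib, Finset.sum_const, nsmul_eq_mul]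
  have hsumSp : ∑ j ∈ Finset.Icc i (M + i - 1), f j = ∑ j ∈ T, f j := by
    rw [hSp, Finset.sum_insert hiT, hfi, zero_add]
  have hsumSm : ∑ j ∈ Finset.Icc (i + 1) (M + i), f j = ∑ j ∈ T, f j := by
    rw [hSm, Finset.sum_insert hMiT, hfMi, zero_add]
  have hcardSp : (Finset.Icc i (M + i - 1)).card = M := by
    rw [Nat.card_Icc]; omega
  have hcardSm : (Finset.Icc (i + 1) (M + i)).card = M := by
    rw [Nat.card_Icc]; omega
  have hcardT : T.card = M - 1 := by
    rw [hT, Nat.card_Icc]; omega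
  constructor
  · rw [hsum, hsum, hsumSp, hsumSm, hcardSp, hcardSm]
  · intro S hS hne1 hne2
    obtain ⟨hsub, hcard⟩ := Finset.mem_powersetCard.mp hS
    have key : ∑ j ∈ T, f j < ∑ j ∈ S, f j := by
      have hd1 : ∑ j ∈ S ∩ T, f j + ∑ j ∈ S \ T, f j = ∑ j ∈ S, f j :=
        Finset.sum_inter_add_sum_sdiff S T f
      have hd2 : ∑ j ∈ T ∩ S, f j + ∑ j ∈ T \ S, f j = ∑ j ∈ T, f j :=
        Finset.sum_inter_add_sum_sdiff T S f
      have hIeq : S ∩ T = T ∩ S := Finset.inter_comm S T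
      have hSdT : ∀ j ∈ S \ T, 0 ≤ f j := by
        intro j hj
        rw [Finset.mem_sdiff] at hj
        have hj1 := Finset.mem_Icc.mp (hsub hj.1)
        have hj2 : ¬(i + 1 ≤ j ∧ j ≤ M + i - 1) := by
          intro h; exact hj.2 (by rw [hT]; exact Finset.mem_Icc.mpr h)
        rcases eq_or_ne j i with rfl | h1
        · rw [hfi]
        rcases eq_or_ne j (M + i) with rfl | h2
        · rw [hfMi]
        exact le_of_lt (hfpos j hj1.1 hj1.2 (by omega))
      by_cases hTS : T ⊆ S
      · have hTdS : T \ S = ∅ := Finset.sdiff_eq_empty_iff_subset.mpr hTS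
        have hTiS : T ∩ S = T := Finset.inter_eq_left.mpr hTS
        have hcd : (S \ T).card = 1 := by
          rw [Finset.card_sdiff_of_subset hTS, hcard, hcardT]; omega
        obtain ⟨x, hx⟩ := Finset.card_eq_one.mp hcd
        have hxS : x ∈ S \ T := by rw [hx]; exact Finset.mem_singleton_self x
        rw [Finset.mem_sdiff] at hxS
        have hSeq : S = insert x T := by
          ext j
          simp only [Finset.mem_insert]
          constructor
          · intro hjS
            by_cases hjT : j ∈ T
            · exact Or.inr hjT
            · left
              have : j ∈ S \ T := Finset.mem_sdiff.mpr ⟨hjS, hjT⟩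
              rw [hx, Finset.mem_singleton] at this
              exact this
          · rintro (rfl | hjT)
            · exact hxS.1
            · exact hTS hjT
        have hx1 := Finset.mem_Icc.mp (hsub hxS.1)
        have hxT : ¬(i + 1 ≤ x ∧ x ≤ M + i - 1) := by
          intro h; exact hxS.2 (by rw [hT]; exact Finset.mem_Icc.mpr h)
        have hxi : x ≠ i := by
          intro h; exact hne1 (by rw [hSeq, h, hSp])
        have hxMi : x ≠ M + i := by
          intro h; exact hne2 (by rw [hSeq, h, hSm])
        have hfx : 0 < f x := hfpos x hx1.1 hx1.2 (by omega)
        have hsx : ∑ j ∈ S \ T, f j = f x := by rw [hx, Finset.sum_singleton]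
        have hTdS0 : ∑ j ∈ T \ S, f j = 0 := by rw [hTdS, Finset.sum_empty]
        linarith [hd1, hd2, hIeq ▸ hd1]
      · have hne : (T \ S).Nonempty := by
          rw [Finset.sdiff_nonempty]; exact hTS
        have hneg : ∑ j ∈ T \ S, f j < 0 := by
          apply Finset.sum_neg _ hne
          intro j hj
          have hjT := Finset.mem_Icc.mp (hT ▸ (Finset.mem_sdiff.mp hj).1)
          exact hfneg j (by omega) (by omega)
        have hpos : 0 ≤ ∑ j ∈ S \ T, f j := Finset.sum_nonneg hSdT
        linarith [hd1, hIeq ▸ hd2]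
    rw [hsum, hsum, hsumSp, hcardSp, hcard]
    linarith
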